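/- Let T be a measure-preserving transformation and I a set of positive finite measure. Suppose that for a fixed n ∈ ℕ and constant c > 0, the inequality (1/a_n(I)) ∑_{k=0}^{n−1} μ(I ∩ T^k B) ≤ c·μ(B) holds for all measurable B ⊆ I. Suppose further (rank-one structure) that for every x ∈ I there exist levels J ∋ x of arbitrarily small measure, each J satisfying: (1/a_n(I)) ∑_{k=0}^{n−1} 1_I(T^k x) = (1/a_n(I)) ∑_{k=0}^{n−1} μ(I ∩ T^k J)/μ(J). Then ‖(1/a_n(I)) S_n(1_I)‖_∞ ≤ c, where S_n(1_I) = ∑_{k=0}^{n−1} 1_I ∘ T^k. -/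

import Mathlib

open MeasureTheory

/-- Images do not shrink under a measure-preserving map. -/
lemma measure_le_measure_image {X : Type*} [MeasurableSpace X] {μ : Measure X} {T : X → X}
    (hT : MeasurePreserving T μ μ) (B : Set X) : μ B ≤ μ (T '' B) := by
  calc μ B ≤ μ (T ⁻¹' (toMeasurable μ (T '' B))) :=
        measure_mono fun x hx => subset_toMeasurable _ _ (Set.mem_image_of_mem T hx)
    _ = μ (toMeasurable μ (T '' B)) :=
        hT.measure_preimage (measurableSet_toMeasurable _ _).nullMeasurableSet
    _ = μ (T '' B) := measure_toMeasurable _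

/-- If the normalized correlation sums of `I` against all `B ⊆ I` are bounded by `c·μ(B)`,
and each `x ∈ I` lies in levels `J` of arbitrarily small measure for which the Birkhoff sum
at `x` equals the normalized intersection sum over `J`, then
`‖(1/a_n(I)) S_n(1_I)‖_∞ ≤ c`. -/
theorem stmt_8 {X : Type*} [MeasurableSpace X] (μ : Measure X)
    (T : X → X) (hT : MeasurePreserving T μ μ)
    (I : Set X) (hI : MeasurableSet I) (hI0 : 0 < μ I) (hIfin : μ I < ⊤)
    (n : ℕ) (c : ℝ) (hc : 0 < c)
    (a : ℝ) (ha : a = ∑ k ∈ Finset.range n, (μ (I ∩ T^[k] '' I)).toReal / (μ I).toReal ^ 2)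
    (hbound : ∀ B : Set X, MeasurableSet B → B ⊆ I →
      (∑ k ∈ Finset.range n, (μ (I ∩ T^[k] '' B)).toReal) / a ≤ c * (μ B).toReal)
    (hlevel : ∀ x ∈ I, ∀ δ : ℝ, 0 < δ → ∃ J : Set X, MeasurableSet J ∧ x ∈ J ∧
      0 < μ J ∧ (μ J).toReal < δ ∧
      (∑ k ∈ Finset.range n, Set.indicator I (fun _ => (1 : ℝ)) (T^[k] x)) / a
        = (∑ k ∈ Finset.range n, (μ (I ∩ T^[k] '' J)).toReal / (μ J).toReal) / a) :
    eLpNorm (fun x =>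
        (∑ k ∈ Finset.range n, Set.indicator I (fun _ => (1 : ℝ)) (T^[k] x)) / a) ⊤ μ
      ≤ ENNReal.ofReal c := by
  classical
  rw [eLpNorm_exponent_top]
  rcases Nat.eq_zero_or_pos n with hn | hn
  · subst hn
    apply eLpNormEssSup_le_of_ae_bound (C := c)
    filter_upwards with x
    simp [hc.le]
  -- now n ≥ 1
  have hμI : 0 < (μ I).toReal := ENNReal.toReal_pos hI0.ne' hIfin.ne
  have ha0 : 0 < a := by
    rw [ha]
    have h0mem : 0 ∈ Finset.range n := Finset.mem_range.mpr hn
    have hterm : (0 : ℝ) < (μ (I ∩ T^[0] '' I)).toReal / (μ I).toReal ^ 2 := by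
      simp only [Function.iterate_zero, Set.image_id, Set.inter_self]
      positivity
    refine lt_of_lt_of_le hterm ?_
    exact Finset.single_le_sum (f := fun k => (μ (I ∩ T^[k] '' I)).toReal / (μ I).toReal ^ 2)
      (fun k _ => by positivity) h0mem
  have hca : (0 : ℝ) ≤ c * a := by positivity
  set m₀ : ℕ := Nat.floor (c * a) + 1 with hm₀
  -- the count function
  set cnt : X → ℕ := fun x => ((Finset.range n).filter fun k => T^[k] x ∈ I).card with hcnt
  have hsum_eq : ∀ x, (∑ k ∈ Finset.range n, Set.indicator I (fun _ => (1 : ℝ)) (T^[k] x))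
      = (cnt x : ℝ) := by
    intro x
    simp [hcnt, Set.indicator_apply, Finset.sum_boole]
  -- the exceptional sets B_K are null
  have hTk : ∀ k : ℕ, Measurable (T^[k]) := fun k => hT.measurable.iterate k
  have hBK : ∀ K : Finset ℕ, K ⊆ Finset.range n → K.card = m₀ →
      μ (I ∩ ⋂ k ∈ K, T^[k] ⁻¹' I) = 0 := by
    intro K hKsub hKcard
    by_contra h0
    set B : Set X := I ∩ ⋂ k ∈ K, T^[k] ⁻¹' I with hB
    have hBmeas : MeasurableSet B :=
      hI.inter (Finset.measurableSet_biInter _ fun k _ => hTk k hI)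
    have hBsubI : B ⊆ I := Set.inter_subset_left
    have hBfin : μ B ≠ ⊤ := ((measure_mono hBsubI).trans_lt hIfin).ne
    have hBpos : 0 < (μ B).toReal := ENNReal.toReal_pos h0 hBfin
    have hBlow : ∀ k ∈ K, (μ B).toReal ≤ (μ (I ∩ T^[k] '' B)).toReal := by
      intro k hk
      have himg : T^[k] '' B ⊆ I := by
        rintro y ⟨x, hx, rfl⟩
        exact Set.mem_iInter₂.mp hx.2 k hk
      have heq : I ∩ T^[k] '' B = T^[k] '' B := Set.inter_eq_right.mpr himg
      rw [heq]
      have hle : μ B ≤ μ (T^[k] '' B) := measure_le_measure_image (hT.iterate k) B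
      have hfin : μ (T^[k] '' B) ≠ ⊤ := by
        rw [← heq]
        exact ((measure_mono Set.inter_subset_left).trans_lt hIfin).ne
      exact (ENNReal.toReal_le_toReal hBfin hfin).mpr hle
    have hlow : (m₀ : ℝ) * (μ B).toReal
        ≤ ∑ k ∈ Finset.range n, (μ (I ∩ T^[k] '' B)).toReal := by
      calc (m₀ : ℝ) * (μ B).toReal = K.card • (μ B).toReal := by
            rw [hKcard, nsmul_eq_mul]
        _ ≤ ∑ k ∈ K, (μ (I ∩ T^[k] '' B)).toReal := Finset.card_nsmul_le_sum K _ _ hBlow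
        _ ≤ ∑ k ∈ Finset.range n, (μ (I ∩ T^[k] '' B)).toReal :=
            Finset.sum_le_sum_of_subset_of_nonneg hKsub
              (fun k _ _ => ENNReal.toReal_nonneg)
    have hup := hbound B hBmeas hBsubI
    rw [div_le_iff₀ ha0] at hup
    have : (m₀ : ℝ) * (μ B).toReal ≤ c * (μ B).toReal * a := hlow.trans hup
    have hm₀le : (m₀ : ℝ) ≤ c * a := by
      have h := (mul_le_mul_iff_of_pos_right hBpos).mp (by linarith [this] : (m₀ : ℝ) * (μ B).toReal
        ≤ (c * a) * (μ B).toReal)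
      exact h
    have hlt : c * a < (m₀ : ℝ) := by
      have := Nat.lt_floor_add_one (c * a)
      push_cast [hm₀]
      push_cast at this
      linarith
    linarith
  -- the union of all bad sets is null
  set G : Set X := ⋃ K ∈ (Finset.range n).powersetCard m₀,
      (I ∩ ⋂ k ∈ K, T^[k] ⁻¹' I) with hG
  have hGmeas : MeasurableSet G := by
    refine Finset.measurableSet_biUnion _ fun K _ => ?_
    exact hI.inter (Finset.measurableSet_biInter _ fun k _ => hTk k hI)
  have hGnull : μ G = 0 := by
    refine le_antisymm ?_ (zero_le)
    rw [hG]
    refine le_trans (measure_biUnion_finset_le _ _) (le_of_eq ?_)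
    refine Finset.sum_eq_zero fun K hK => ?_
    rw [Finset.mem_powersetCard] at hK
    exact hBK K hK.1 hK.2
  set N : Set X := ⋃ j ∈ Finset.range n, T^[j] ⁻¹' G with hN
  have hNnull : μ N = 0 := by
    refine le_antisymm ?_ (zero_le)
    rw [hN]
    refine le_trans (measure_biUnion_finset_le _ _) (le_of_eq ?_)
    refine Finset.sum_eq_zero fun j _ => ?_
    rw [(hT.iterate j).measure_preimage hGmeas.nullMeasurableSet]
    exact hGnull
  -- the pointwise bound off N
  apply eLpNormEssSup_le_of_ae_bound (C := c)
  have hNc : ∀ᵐ x ∂μ, x ∉ N := measure_eq_zero_iff_ae_notMem.mp hNnull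
  filter_upwards [hNc] with x hx
  have hcntlt : cnt x < m₀ := by
    by_contra hge
    push_neg at hge
    apply hx
    set H : Finset ℕ := (Finset.range n).filter fun k => T^[k] x ∈ I with hH
    have hHcard : m₀ ≤ H.card := hge
    have hHne : H.Nonempty := Finset.card_pos.mp (lt_of_lt_of_le (Nat.succ_pos _) hHcard)
    set j : ℕ := H.min' hHne with hj
    have hjH : j ∈ H := H.min'_mem hHne
    have hjn : j < n := Finset.mem_range.mp (Finset.mem_filter.mp hjH).1
    have hyI : T^[j] x ∈ I := (Finset.mem_filter.mp hjH).2
    set y : X := T^[j] x with hy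
    set H' : Finset ℕ := (Finset.range n).filter fun k => T^[k] y ∈ I with hH'
    have himage : H.image (· - j) ⊆ H' := by
      intro m hm
      rw [Finset.mem_image] at hm
      obtain ⟨k, hkH, rfl⟩ := hm
      have hkj : j ≤ k := H.min'_le k hkH
      have hkn : k < n := Finset.mem_range.mp (Finset.mem_filter.mp hkH).1
      have hkI : T^[k] x ∈ I := (Finset.mem_filter.mp hkH).2
      rw [hH', Finset.mem_filter, Finset.mem_range]
      constructor
      · omega
      · rw [hy, ← Function.iterate_add_apply]
        rwa [Nat.sub_add_cancel hkj]
    have hinj : Set.InjOn (· - j) H := by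
      intro k₁ h₁ k₂ h₂ heq
      have h₁j : j ≤ k₁ := H.min'_le _ h₁
      have h₂j : j ≤ k₂ := H.min'_le _ h₂
      simp only at heq
      omega
    have hH'card : m₀ ≤ H'.card := by
      calc m₀ ≤ H.card := hHcard
        _ = (H.image (· - j)).card := (Finset.card_image_of_injOn hinj).symm
        _ ≤ H'.card := Finset.card_le_card himage
    obtain ⟨K, hKsub, hKcard⟩ := Finset.exists_subset_card_eq hH'card
    have hKrange : K ⊆ Finset.range n := hKsub.trans (Finset.filter_subset _ _)
    have hyG : y ∈ G := by
      rw [hG]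
      refine Set.mem_iUnion₂.mpr ⟨K, Finset.mem_powersetCard.mpr ⟨hKrange, hKcard⟩, hyI, ?_⟩
      refine Set.mem_iInter₂.mpr fun k hk => ?_
      exact (Finset.mem_filter.mp (hKsub hk)).2
    rw [hN]
    exact Set.mem_iUnion₂.mpr ⟨j, Finset.mem_range.mpr hjn, hyG⟩
  -- conclude
  have hcle : (cnt x : ℝ) ≤ c * a := by
    have h1 : cnt x ≤ Nat.floor (c * a) := by omega
    calc (cnt x : ℝ) ≤ (Nat.floor (c * a) : ℝ) := by exact_mod_cast h1
      _ ≤ c * a := Nat.floor_le hca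
  rw [hsum_eq x]
  have hnn : (0 : ℝ) ≤ (cnt x : ℝ) / a := div_nonneg (Nat.cast_nonneg _) ha0.le
  rw [Real.norm_eq_abs, abs_of_nonneg hnn, div_le_iff₀ ha0]
  linarith
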